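/- Let Γ = (V,E) be a finite d-regular graph with d ≥ 1 and let 2 ≤ n ≤ |V|. Then ρ_Γ(n) ≤ h'_n(Γ) ≤ n·ρ_Γ(n), where ρ_Γ(n) = min max_{1≤i≤n} |∂S_i|/(d·|S_i|), the minimum being over all collections of n non-empty pairwise disjoint subsets S_1,…,S_n ⊆ V, and h'_n(Γ) = h_n(Γ)/d. -/

import Mathlib

open scoped Pointwise

namespace Multiway

variable {V : Type*}

/-- The edge boundary `∂A`: the set of edges with one endpoint in `A` and the other in `Vᶜ∖A`. -/
def edgeBdry (G : SimpleGraph V) (A : Set V) : Set (Sym2 V) :=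
  {e | e ∈ G.edgeSet ∧ ∃ u v, e = s(u, v) ∧ u ∈ A ∧ v ∉ A}

/-- The symmetric vertex boundary `δA`: vertices incident to an edge crossing `A`. -/
def vertBdry (G : SimpleGraph V) (A : Set V) : Set V :=
  {x | ∃ y, G.Adj x y ∧ ¬ (x ∈ A ↔ y ∈ A)}

/-- A partition of the vertex set into `n` non-empty pairwise disjoint sets. -/
def IsNPartition (n : ℕ) (A : Fin n → Set V) : Prop :=
  (∀ i, (A i).Nonempty) ∧ (∀ i j, i ≠ j → Disjoint (A i) (A j)) ∧ (⋃ i, A i) = Set.univ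

/-- `max_i |∂A_i| / |A_i|`. -/
noncomputable def edgeRatioMax (G : SimpleGraph V) {n : ℕ} (A : Fin n → Set V) : ℝ :=
  ⨆ i, ((edgeBdry G (A i)).ncard : ℝ) / ((A i).ncard : ℝ)

/-- `max_i |δA_i| / |A_i|`. -/
noncomputable def vertRatioMax (G : SimpleGraph V) {n : ℕ} (A : Fin n → Set V) : ℝ :=
  ⨆ i, ((vertBdry G (A i)).ncard : ℝ) / ((A i).ncard : ℝ)

/-- The `n`-way isoperimetric constant `h_n(Γ)`. -/
noncomputable def multiH (G : SimpleGraph V) (n : ℕ) : ℝ :=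
  sInf {r | ∃ A : Fin n → Set V, IsNPartition n A ∧ r = edgeRatioMax G A}

/-- The `n`-way symmetric vertex isoperimetric constant `ι_n(Γ)`. -/
noncomputable def multiIota (G : SimpleGraph V) (n : ℕ) : ℝ :=
  sInf {r | ∃ A : Fin n → Set V, IsNPartition n A ∧ r = vertRatioMax G A}

/-- A graph is vertex-transitive if its automorphism group acts transitively on vertices. -/
def VertexTransitive (G : SimpleGraph V) : Prop :=
  ∀ u v : V, ∃ φ : G ≃g G, φ u = v


/-- `ρ_Γ(n)`: minimum of `max_i |∂S_i|/(d·|S_i|)` over collections of `n` non-empty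
pairwise disjoint subsets (not necessarily covering `V`). -/
noncomputable def rhoLGT (G : SimpleGraph V) (d n : ℕ) : ℝ :=
  sInf {r | ∃ S : Fin n → Set V, (∀ i, (S i).Nonempty) ∧
    (∀ i j, i ≠ j → Disjoint (S i) (S j)) ∧
    r = ⨆ i, ((edgeBdry G (S i)).ncard : ℝ) / (d * (S i).ncard)}

lemma ncard_biUnion_le {ι α : Type*} [Finite α] (t : Finset ι) (f : ι → Set α) :
    (⋃ i ∈ t, f i).ncard ≤ ∑ i ∈ t, (f i).ncard := by
  classical
  induction t using Finset.induction with
  | empty => simp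
  | @insert a s h ih =>
    rw [Finset.set_biUnion_insert, Finset.sum_insert h]
    exact (Set.ncard_union_le _ _).trans (by gcongr)

lemma exists_npartition [Fintype V] (n : ℕ) (hn : 1 ≤ n) (hcard : n ≤ Fintype.card V) :
    ∃ A : Fin n → Set V, IsNPartition n A := by
  have : Nonempty (Fin n ↪ V) :=
    Function.Embedding.nonempty_of_card_le (by simpa using hcard)
  obtain ⟨f⟩ := this
  classical
  set c : V → Fin n := fun v => if h : ∃ i, f i = v then h.choose else ⟨0, hn⟩ with hc
  have hcf : ∀ i, c (f i) = i := by
    intro i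
    have h : ∃ j, f j = f i := ⟨i, rfl⟩
    simp only [hc, dif_pos h]
    exact f.injective h.choose_spec
  refine ⟨fun i => c ⁻¹' {i}, fun i => ⟨f i, by simp [hcf i]⟩, ?_, ?_⟩
  · intro i j hij
    rw [Set.disjoint_left]
    rintro x (hx : c x = i) (hx' : c x = j)
    exact hij (hx ▸ hx' ▸ rfl)
  · ext x
    simp only [Set.mem_iUnion, Set.mem_preimage, Set.mem_singleton_iff, Set.mem_univ, iff_true]
    exact ⟨c x, rfl⟩

theorem rho_le_normalized_h_le {V : Type*} [Fintype V] (G : SimpleGraph V)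
    [DecidableRel G.Adj] (d : ℕ) (hd : 1 ≤ d) (hreg : G.IsRegularOfDegree d)
    (n : ℕ) (hn : 2 ≤ n) (hcard : n ≤ Fintype.card V) :
    rhoLGT G d n ≤ multiH G n / d ∧ multiH G n / d ≤ n * rhoLGT G d n := by
  classical
  have hn1 : Nonempty (Fin n) := ⟨⟨0, by omega⟩⟩
  have dpos : (0:ℝ) < d := by exact_mod_cast hd
  have npos : (0:ℝ) < n := by exact_mod_cast (by omega : 0 < n)
  have hn2R : (2:ℝ) ≤ n := by exact_mod_cast hn
  obtain ⟨A₀, hA₀⟩ := exists_npartition n (by omega) hcard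
  set H : Set ℝ := {r | ∃ A : Fin n → Set V, IsNPartition n A ∧ r = edgeRatioMax G A}
    with hHdef
  set T : Set ℝ := {r | ∃ S : Fin n → Set V, (∀ i, (S i).Nonempty) ∧
    (∀ i j, i ≠ j → Disjoint (S i) (S j)) ∧
    r = ⨆ i, ((edgeBdry G (S i)).ncard : ℝ) / (d * (S i).ncard)} with hTdef
  have hmultiH : multiH G n = sInf H := rfl
  have hrho : rhoLGT G d n = sInf T := rfl
  have hH_ne : H.Nonempty := ⟨_, A₀, hA₀, rfl⟩
  have hT_ne : T.Nonempty := ⟨_, A₀, hA₀.1, hA₀.2.1, rfl⟩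
  have hT0 : ∀ r ∈ T, (0:ℝ) ≤ r := by
    rintro r ⟨S, -, -, rfl⟩
    exact Real.iSup_nonneg fun i => div_nonneg (Nat.cast_nonneg _) (by positivity)
  have hH0 : ∀ r ∈ H, (0:ℝ) ≤ r := by
    rintro r ⟨A, -, rfl⟩
    exact Real.iSup_nonneg fun i => div_nonneg (Nat.cast_nonneg _) (Nat.cast_nonneg _)
  have hTbdd : BddBelow T := ⟨0, hT0⟩
  have hHbdd : BddBelow H := ⟨0, hH0⟩
  constructor
  · -- ρ ≤ h / d
    rw [hmultiH, hrho, le_div_iff₀ dpos]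
    refine le_csInf hH_ne ?_
    rintro r ⟨A, hA, rfl⟩
    have h1 : sInf T ≤ ⨆ i, ((edgeBdry G (A i)).ncard : ℝ) / (d * (A i).ncard) :=
      csInf_le hTbdd ⟨A, hA.1, hA.2.1, rfl⟩
    have h2 : (⨆ i, ((edgeBdry G (A i)).ncard : ℝ) / (d * (A i).ncard))
        ≤ edgeRatioMax G A / d := by
      refine ciSup_le fun i => ?_
      rw [mul_comm, ← div_div]
      unfold edgeRatioMax
      exact div_le_div_of_nonneg_right (le_ciSup (f := fun i =>
        ((edgeBdry G (A i)).ncard : ℝ) / ((A i).ncard : ℝ))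
        ((Set.finite_range _).bddAbove) i) dpos.le
    rw [← le_div_iff₀ dpos]
    exact h1.trans h2
  · -- h / d ≤ n ρ
    have key : ∀ m ∈ T, multiH G n / (d * n) ≤ m := by
      rintro mm ⟨S, hSne, hSdisj, rfl⟩
      set m := ⨆ i, ((edgeBdry G (S i)).ncard : ℝ) / (d * (S i).ncard) with hm
      have hbddm : BddAbove (Set.range fun i =>
          ((edgeBdry G (S i)).ncard : ℝ) / (d * (S i).ncard)) :=
        (Set.finite_range _).bddAbove
      have hm0 : 0 ≤ m := Real.iSup_nonneg fun i =>
        div_nonneg (Nat.cast_nonneg _) (by positivity)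
      have hSpos : ∀ j, (0:ℝ) < (S j).ncard := fun j => by
        exact_mod_cast (Set.ncard_pos (Set.toFinite _)).mpr (hSne j)
      have hterm : ∀ j, ((edgeBdry G (S j)).ncard : ℝ) ≤ m * (d * (S j).ncard) := by
        intro j
        have h := le_ciSup hbddm j
        rwa [div_le_iff₀ (mul_pos dpos (hSpos j))] at h
      obtain ⟨i₀, -, hmax⟩ := Finset.exists_max_image Finset.univ
        (fun i => (S i).ncard) Finset.univ_nonempty
      set U : Set V := ⋃ k ∈ Finset.univ.erase i₀, S k with hU
      set A : Fin n → Set V := fun j => if j = i₀ then Uᶜ else S j with hA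
      have hSU : ∀ x, x ∈ U ↔ ∃ k, k ≠ i₀ ∧ x ∈ S k := by
        intro x
        simp only [hU, Set.mem_iUnion, Finset.mem_erase, Finset.mem_univ, and_true,
          exists_prop]
      have hSi₀U : S i₀ ⊆ Uᶜ := by
        intro x hx
        simp only [Set.mem_compl_iff]
        intro hxU
        obtain ⟨k, hk, hxk⟩ := (hSU x).1 hxU
        exact Set.disjoint_left.mp (hSdisj k i₀ hk) hxk hx
      have hApart : IsNPartition n A := by
        refine ⟨?_, ?_, ?_⟩
        · intro j
          by_cases hj : j = i₀
          · simp only [hA, if_pos hj]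
            exact (hSne i₀).mono hSi₀U
          · simpa [hA, hj] using hSne j
        · intro i j hij
          by_cases hi : i = i₀ <;> by_cases hj : j = i₀
          · exact absurd (hi.trans hj.symm) hij
          · simp only [hA, if_pos hi, if_neg hj]
            rw [Set.disjoint_left]
            intro x hx hxj
            exact hx ((hSU x).2 ⟨j, hj, hxj⟩)
          · simp only [hA, if_pos hj, if_neg hi]
            rw [Set.disjoint_right]
            intro x hx hxi
            exact hx ((hSU x).2 ⟨i, hi, hxi⟩)
          · simpa [hA, hi, hj] using hSdisj i j hij
        · ext x
          simp only [Set.mem_iUnion, Set.mem_univ, iff_true]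
          by_cases hx : x ∈ U
          · obtain ⟨k, hk, hxk⟩ := (hSU x).1 hx
            exact ⟨k, by simpa [hA, hk] using hxk⟩
          · exact ⟨i₀, by simpa [hA] using hx⟩
      have hAi₀ : A i₀ = Uᶜ := by simp [hA]
      have hbdsub : edgeBdry G (A i₀) ⊆ ⋃ k ∈ Finset.univ.erase i₀, edgeBdry G (S k) := by
        rintro e ⟨he, u, v, rfl, hu, hv⟩
        rw [hAi₀] at hu hv
        have hv' : v ∈ U := by simpa using hv
        obtain ⟨k, hk, hvk⟩ := (hSU v).1 hv'
        have huk : u ∉ S k := fun h => hu ((hSU u).2 ⟨k, hk, h⟩)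
        simp only [Set.mem_iUnion, Finset.mem_erase, Finset.mem_univ, and_true, exists_prop]
        exact ⟨k, hk, he, v, u, Sym2.eq_swap, hvk, huk⟩
      have hSA : ((S i₀).ncard : ℝ) ≤ (A i₀).ncard := by
        exact_mod_cast Set.ncard_le_ncard (hAi₀ ▸ hSi₀U) (Set.toFinite _)
      have hApos : (0:ℝ) < (A i₀).ncard := lt_of_lt_of_le (hSpos i₀) hSA
      have hnum : ((edgeBdry G (A i₀)).ncard : ℝ) ≤ m * d * ((n:ℝ) - 1) * (S i₀).ncard := by
        have h1 : (edgeBdry G (A i₀)).ncard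
            ≤ ∑ k ∈ Finset.univ.erase i₀, (edgeBdry G (S k)).ncard :=
          (Set.ncard_le_ncard hbdsub (Set.toFinite _)).trans (ncard_biUnion_le _ _)
        have h2 : ((edgeBdry G (A i₀)).ncard : ℝ)
            ≤ ∑ k ∈ Finset.univ.erase i₀, ((edgeBdry G (S k)).ncard : ℝ) := by
          exact_mod_cast h1
        refine h2.trans ?_
        have h3 : ∑ k ∈ Finset.univ.erase i₀, ((edgeBdry G (S k)).ncard : ℝ)
            ≤ ∑ k ∈ Finset.univ.erase i₀, m * d * ((S k).ncard : ℝ) :=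
          Finset.sum_le_sum fun k _ => (hterm k).trans_eq (by ring)
        refine h3.trans ?_
        have h4 : ∑ k ∈ Finset.univ.erase i₀, ((S k).ncard : ℝ)
            ≤ ((n:ℝ) - 1) * (S i₀).ncard := by
          calc ∑ k ∈ Finset.univ.erase i₀, ((S k).ncard : ℝ)
              ≤ ∑ _k ∈ Finset.univ.erase i₀, ((S i₀).ncard : ℝ) :=
                Finset.sum_le_sum fun k _ => by
                  exact_mod_cast hmax k (Finset.mem_univ k)
            _ = ((Finset.univ.erase i₀).card : ℝ) * (S i₀).ncard := by
                rw [Finset.sum_const, nsmul_eq_mul]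
            _ = ((n:ℝ) - 1) * (S i₀).ncard := by
                rw [Finset.card_erase_of_mem (Finset.mem_univ _), Finset.card_univ,
                  Fintype.card_fin]
                congr 1
                push_cast [Nat.cast_sub (by omega : 1 ≤ n)]
                ring
        calc ∑ k ∈ Finset.univ.erase i₀, m * d * ((S k).ncard : ℝ)
            = m * d * ∑ k ∈ Finset.univ.erase i₀, ((S k).ncard : ℝ) := by
              rw [← Finset.mul_sum]
          _ ≤ m * d * (((n:ℝ) - 1) * (S i₀).ncard) := by
              apply mul_le_mul_of_nonneg_left h4 (by positivity)
          _ = m * d * ((n:ℝ) - 1) * (S i₀).ncard := by ring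
      have hub : ∀ j, ((edgeBdry G (A j)).ncard : ℝ) / ((A j).ncard : ℝ)
          ≤ d * ((n:ℝ) - 1) * m := by
        intro j
        by_cases hj : j = i₀
        · rw [hj, div_le_iff₀ hApos]
          calc ((edgeBdry G (A i₀)).ncard : ℝ)
              ≤ m * d * ((n:ℝ) - 1) * (S i₀).ncard := hnum
            _ ≤ m * d * ((n:ℝ) - 1) * (A i₀).ncard := by
                apply mul_le_mul_of_nonneg_left hSA
                have : (0:ℝ) ≤ (n:ℝ) - 1 := by linarith
                positivity
            _ = d * ((n:ℝ) - 1) * m * (A i₀).ncard := by ring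
        · have hAj : A j = S j := by simp [hA, hj]
          rw [hAj, div_le_iff₀ (hSpos j)]
          have h := hterm j
          nlinarith [mul_nonneg (mul_nonneg (mul_nonneg dpos.le hm0) (hSpos j).le)
            (by linarith : (0:ℝ) ≤ (n:ℝ) - 2)]
      have hH_le : multiH G n ≤ d * ((n:ℝ) - 1) * m := by
        rw [hmultiH]
        exact (csInf_le hHbdd ⟨A, hApart, rfl⟩).trans (ciSup_le hub)
      rw [div_le_iff₀ (mul_pos dpos npos)]
      nlinarith [hH_le]
    have hrho_ge : multiH G n / (d * n) ≤ rhoLGT G d n := by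
      rw [hrho]
      exact le_csInf hT_ne key
    rw [div_le_iff₀ dpos]
    have := (div_le_iff₀ (mul_pos dpos npos)).mp hrho_ge
    nlinarith [this]


end Multiway
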